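/- Let O ⊆ [K] be any subset. Define Alt(O) := {λ ∈ (ℝ^d)^K : O*(λ) ≠ O}, Alt⁻(O) := (⋃_{i∈O} {λ ∈ (ℝ^d)^K : λ_i ∉ P}) ∪ (⋃_{i,j∈O, i≠j} {λ ∈ (ℝ^d)^K : λ_i ≺ λ_j}), and Alt⁺(O) := ⋃_{i∈[K]∖O} {λ ∈ (ℝ^d)^K : λ_i ∈ P and ∀ j ∈ O, ¬(λ_i ≺ λ_j)}. Then Alt(O) = Alt⁻(O) ∪ Alt⁺(O). -/

import Mathlib

noncomputable section
open scoped Classical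
open Metric Set

abbrev Evec (d : ℕ) := EuclideanSpace ℝ (Fin d)

def Pdom {d : ℕ} (x y : Evec d) : Prop := (∀ c, x c ≤ y c) ∧ x ≠ y

def PolySet {d m : ℕ} (A : Fin m → Fin d → ℝ) (bvec : Fin m → ℝ) : Set (Evec d) :=
  {x | ∀ j, ∑ c, A j c * x c ≤ bvec j}

def OptSet {K d : ℕ} (P : Set (Evec d)) (μ : Fin K → Evec d) : Set (Fin K) :=
  {i | μ i ∈ P ∧ ∀ j, μ j ∈ P → ¬ Pdom (μ i) (μ j)}

/-- Any feasible dominated point has a feasible, undominated dominator. -/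
lemma exists_max_dominator {K d : ℕ} (P : Set (Evec d)) (lam : Fin K → Evec d)
    {i j : Fin K} (hj : lam j ∈ P) (hij : Pdom (lam i) (lam j)) :
    ∃ j', lam j' ∈ P ∧ Pdom (lam i) (lam j') ∧
      ∀ k, lam k ∈ P → ¬ Pdom (lam j') (lam k) := by
  set s : Set (Fin K) := {k | lam k ∈ P ∧ ∀ c, lam j c ≤ lam k c} with hs
  have hfin : s.Finite := Set.toFinite s
  have hne : s.Nonempty := ⟨j, hj, fun c => le_rfl⟩
  obtain ⟨j', hj's, hmax⟩ :=
    Set.Finite.exists_maximalFor (fun k => ((fun c => lam k c) : Fin d → ℝ)) s hfin hne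
  obtain ⟨hj'P, hjle⟩ := hj's
  refine ⟨j', hj'P, ⟨fun c => le_trans (hij.1 c) (hjle c), ?_⟩, ?_⟩
  · intro heq
    apply hij.2
    ext c
    exact le_antisymm (hij.1 c) (heq ▸ hjle c)
  · rintro k hkP ⟨hle, hne'⟩
    have hks : k ∈ s := ⟨hkP, fun c => le_trans (hjle c) (hle c)⟩
    have : (lam j' : Fin d → ℝ) = lam k := le_antisymm (fun c => hle c) (hmax hks (fun c => hle c))
    exact hne' (by ext c; exact congrFun this c)

/-- `Alt(O) = Alt⁻(O) ∪ Alt⁺(O)`. -/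
theorem stmt0 {K d m : ℕ} (hK : 0 < K) (hd : 0 < d) (hm : 0 < m)
    (A : Fin m → Fin d → ℝ) (bvec : Fin m → ℝ) (O : Set (Fin K)) :
    {lam : Fin K → Evec d | OptSet (PolySet A bvec) lam ≠ O} =
      ((⋃ i ∈ O, {lam : Fin K → Evec d | lam i ∉ PolySet A bvec}) ∪
        ⋃ i ∈ O, ⋃ j ∈ O, ⋃ (_ : i ≠ j), {lam : Fin K → Evec d | Pdom (lam i) (lam j)}) ∪
      ⋃ i ∈ Oᶜ, {lam : Fin K → Evec d |
        lam i ∈ PolySet A bvec ∧ ∀ j ∈ O, ¬ Pdom (lam i) (lam j)} := by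
  set P := PolySet A bvec with hP
  ext lam
  simp only [Set.mem_setOf_eq, Set.mem_union, Set.mem_iUnion, Set.mem_compl_iff,
    exists_prop]
  constructor
  · intro hne
    by_cases hfeas : ∀ j ∈ O, lam j ∈ P
    · have : ∃ i, ¬ (i ∈ OptSet P lam ↔ i ∈ O) := by
        by_contra h
        push_neg at h
        exact hne (Set.ext fun i => h i)
      obtain ⟨i, hi⟩ := this
      by_cases hiS : i ∈ OptSet P lam
      · have hiO : i ∉ O := fun h => hi ⟨fun _ => h, fun _ => hiS⟩
        exact Or.inr ⟨i, hiO, hiS.1, fun j hjO => hiS.2 j (hfeas j hjO)⟩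
      · have hiO : i ∈ O := by
          by_contra h
          exact hi ⟨fun h' => absurd h' hiS, fun h' => absurd h' h⟩
        have hiP : lam i ∈ P := hfeas i hiO
        have : ∃ j, lam j ∈ P ∧ Pdom (lam i) (lam j) := by
          by_contra h
          push_neg at h
          exact hiS ⟨hiP, h⟩
        obtain ⟨j, hjP, hij⟩ := this
        obtain ⟨j', hj'P, hij', hund⟩ := exists_max_dominator P lam hjP hij
        by_cases hj'O : j' ∈ O
        · refine Or.inl (Or.inr ⟨i, hiO, j', hj'O, ?_, hij'⟩)
          intro h; exact hij'.2 (h ▸ rfl)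
        · exact Or.inr ⟨j', hj'O, hj'P, fun k hkO => hund k (hfeas k hkO)⟩
    · push_neg at hfeas
      obtain ⟨j, hjO, hjP⟩ := hfeas
      exact Or.inl (Or.inl ⟨j, hjO, hjP⟩)
  · intro h hSO
    rcases h with (⟨i, hiO, hiP⟩ | ⟨i, hiO, j, hjO, hij, hdom⟩) | ⟨i, hiO, hiP, hund⟩
    · exact hiP (hSO ▸ hiO : i ∈ OptSet P lam).1
    · have hiS : i ∈ OptSet P lam := hSO ▸ hiO
      have hjS : j ∈ OptSet P lam := hSO ▸ hjO
      exact hiS.2 j hjS.1 hdom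
    · have hiS : i ∉ OptSet P lam := fun h => hiO (hSO ▸ h)
      have : ∃ j, lam j ∈ P ∧ Pdom (lam i) (lam j) := by
        by_contra h
        push_neg at h
        exact hiS ⟨hiP, h⟩
      obtain ⟨j, hjP, hij⟩ := this
      obtain ⟨j', hj'P, hij', hund'⟩ := exists_max_dominator P lam hjP hij
      have hj'S : j' ∈ OptSet P lam := ⟨hj'P, hund'⟩
      have hj'O : j' ∈ O := hSO ▸ hj'S
      exact hund j' hj'O hij'
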